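/- arXiv:1309.2552 — 2 statements merged into one kernel-verified Lean document; each statement's English description precedes it below -/
import Mathlib

section
/- Let $A=\begin{pmatrix}0&b\\c&0\end{pmatrix}$ and endow $\mathbb{R}^3$ with the Riemannian metric $g_{(x,y,z)}=(a_{21}(z)^2+a_{11}(z)^2)dx^2+(a_{11}(z)^2+a_{12}(z)^2)dy^2+dz^2-(a_{11}(z)a_{21}(z)+a_{12}(z)a_{11}(z))(dx\otimes dy+dy\otimes dx)$, where $a_{ij}(z)$ are the entries of $e^{zA}$. Then for any $x_0\in\mathbb{R}$, the map $\phi(x,y,z)=(-x+2x_0,\,y,\,-z)$ (rotation by angle $\pi$ about the line $\{(x_0,t,0):t\in\mathbb{R}\}$) is an isometry of this metric. -/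
open NormedSpace

/-- Entries of the matrix exponential `e^{zA}`. -/
noncomputable def aEntry (A : Matrix (Fin 2) (Fin 2) ℝ) (i j : Fin 2) (z : ℝ) : ℝ :=
  exp (z • A) i j

/-- The canonical left invariant metric of `ℝ² ⋊_A ℝ`, `A = !![0,b;c,0]`, in coordinates:
`g = (a₂₁² + a₁₁²)dx² + (a₁₁² + a₁₂²)dy² + dz² - (a₁₁a₂₁ + a₁₂a₁₁)(dx⊗dy + dy⊗dx)`. -/
noncomputable def sdMetric (A : Matrix (Fin 2) (Fin 2) ℝ)
    (p : ℝ × ℝ × ℝ) (v w : ℝ × ℝ × ℝ) : ℝ :=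
  let z := p.2.2
  let a₁₁ := aEntry A 0 0 z; let a₁₂ := aEntry A 0 1 z; let a₂₁ := aEntry A 1 0 z
  (a₂₁ ^ 2 + a₁₁ ^ 2) * (v.1 * w.1) + (a₁₁ ^ 2 + a₁₂ ^ 2) * (v.2.1 * w.2.1)
    + v.2.2 * w.2.2
    - (a₁₁ * a₂₁ + a₁₂ * a₁₁) * (v.1 * w.2.1 + v.2.1 * w.1)

private noncomputable def Jmat : Matrix (Fin 2) (Fin 2) ℝ := !![1, 0; 0, -1]

private lemma Jmat_mul_Jmat : Jmat * Jmat = 1 := by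
  simp [Jmat, Matrix.mul_fin_two, Matrix.one_fin_two]

private lemma Jmat_inv : Jmat⁻¹ = Jmat := by
  apply Matrix.inv_eq_right_inv Jmat_mul_Jmat

private lemma exp_neg_eq (b c : ℝ) (z : ℝ) :
    exp ((-z) • !![0, b; c, 0]) = Jmat * exp (z • !![0, b; c, 0]) * Jmat := by
  have hU : IsUnit Jmat := by
    rw [Matrix.isUnit_iff_isUnit_det]
    simp [Jmat, Matrix.det_fin_two_of]
  have hconj : Jmat * (z • !![0, b; c, 0]) * Jmat⁻¹ = (-z) • !![0, b; c, 0] := by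
    rw [Jmat_inv]
    ext i j
    fin_cases i <;> fin_cases j <;>
      simp [Jmat, Matrix.mul_apply, Fin.sum_univ_two]
  rw [← hconj, Matrix.exp_conj _ _ hU, Jmat_inv]

private lemma aEntry_neg (b c : ℝ) (z : ℝ) (i j : Fin 2) :
    aEntry !![0, b; c, 0] i j (-z)
      = (if i = j then 1 else -1) * aEntry !![0, b; c, 0] i j z := by
  simp only [aEntry, exp_neg_eq]
  fin_cases i <;> fin_cases j <;>
    simp [Jmat, Matrix.mul_apply, Matrix.vecMul, dotProduct, Fin.sum_univ_two]

private lemma a11_neg (b c z : ℝ) :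
    aEntry !![0, b; c, 0] 0 0 (-z) = aEntry !![0, b; c, 0] 0 0 z := by
  simpa using aEntry_neg b c z 0 0

private lemma a12_neg (b c z : ℝ) :
    aEntry !![0, b; c, 0] 0 1 (-z) = -aEntry !![0, b; c, 0] 0 1 z := by
  simpa using aEntry_neg b c z 0 1

private lemma a21_neg (b c z : ℝ) :
    aEntry !![0, b; c, 0] 1 0 (-z) = -aEntry !![0, b; c, 0] 1 0 z := by
  simpa using aEntry_neg b c z 1 0

/-- Rotation by angle `π` about the horizontal geodesic `{(x₀,t,0)}` parallel to the
`y`-axis, `φ(x,y,z) = (-x + 2x₀, y, -z)`, is an isometry of the canonical metric of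
`ℝ² ⋊_A ℝ` for `A = !![0,b;c,0]`: its (linear) differential `dφ(v) = (-v₁, v₂, -v₃)`
preserves the metric. -/
theorem rotation_about_y_axis_geodesic_isometry (b c : ℝ) (x₀ : ℝ)
    (φ : ℝ × ℝ × ℝ → ℝ × ℝ × ℝ) (dφ : ℝ × ℝ × ℝ → ℝ × ℝ × ℝ)
    (hφ : ∀ p : ℝ × ℝ × ℝ, φ p = (-p.1 + 2 * x₀, p.2.1, -p.2.2))
    (hdφ : ∀ v : ℝ × ℝ × ℝ, dφ v = (-v.1, v.2.1, -v.2.2)) :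
    ∀ (p v w : ℝ × ℝ × ℝ),
      sdMetric !![0, b; c, 0] (φ p) (dφ v) (dφ w) = sdMetric !![0, b; c, 0] p v w := by
  intro p v w
  simp only [sdMetric, hφ, hdφ, a11_neg, a12_neg, a21_neg]
  ring
end

section
/- Let $A=\begin{pmatrix}0&b\\c&0\end{pmatrix}$ and endow $\mathbb{R}^3$ with the canonical left invariant metric of $\mathbb{R}^2\rtimes_A\mathbb{R}$ in coordinates, namely $g_{(x,y,z)}=(a_{21}(z)^2+a_{11}(z)^2)dx^2+(a_{11}(z)^2+a_{12}(z)^2)dy^2+dz^2-(a_{11}(z)a_{21}(z)+a_{12}(z)a_{11}(z))(dx\otimes dy+dy\otimes dx)$. Then for any $y_0\in\mathbb{R}$, the map $\psi(x,y,z)=(x,\,-y+2y_0,\,-z)$ is an isometry of this metric. -/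
open NormedSpace

private lemma Uinv : (!![(1:ℝ),0;0,-1])⁻¹ = !![(1:ℝ),0;0,-1] := by
  apply Matrix.inv_eq_right_inv
  ext i j; fin_cases i <;> fin_cases j <;>
    simp [Matrix.mul_apply, Fin.sum_univ_two]

private lemma exp_neg_smul (b c z : ℝ) :
    exp ((-z) • !![(0:ℝ), b; c, 0]) =
      !![(1:ℝ),0;0,-1] * exp (z • !![(0:ℝ), b; c, 0]) * !![(1:ℝ),0;0,-1] := by
  have hU : IsUnit (!![(1:ℝ),0;0,-1]) := by
    rw [Matrix.isUnit_iff_isUnit_det]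
    simp [Matrix.det_fin_two_of]
  have h : !![(1:ℝ),0;0,-1] * (z • !![(0:ℝ), b; c, 0]) * (!![(1:ℝ),0;0,-1])⁻¹
      = (-z) • !![(0:ℝ), b; c, 0] := by
    rw [Uinv]
    ext i j; fin_cases i <;> fin_cases j <;>
      simp [Matrix.mul_apply, Fin.sum_univ_two, Matrix.smul_apply, mul_comm]
  rw [← h]
  have := Matrix.exp_conj !![(1:ℝ),0;0,-1] (z • !![(0:ℝ),b;c,0]) hU
  rw [Uinv] at this ⊢
  exact this

private lemma entry00 (b c z : ℝ) : aEntry !![0,b;c,0] 0 0 (-z) = aEntry !![0,b;c,0] 0 0 z := by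
  simp only [aEntry, exp_neg_smul, Matrix.mul_apply, Fin.sum_univ_two]
  norm_num
private lemma entry01 (b c z : ℝ) : aEntry !![0,b;c,0] 0 1 (-z) = -aEntry !![0,b;c,0] 0 1 z := by
  simp only [aEntry, exp_neg_smul, Matrix.mul_apply, Fin.sum_univ_two]
  norm_num
private lemma entry10 (b c z : ℝ) : aEntry !![0,b;c,0] 1 0 (-z) = -aEntry !![0,b;c,0] 1 0 z := by
  simp only [aEntry, exp_neg_smul, Matrix.mul_apply, Fin.sum_univ_two]
  norm_num

/-- Rotation by angle `π` about the horizontal geodesic parallel to the `x`-axis,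
`ψ(x,y,z) = (x, -y + 2y₀, -z)`, is an isometry of the canonical metric of
`ℝ² ⋊_A ℝ` for `A = !![0,b;c,0]`: its (linear) differential `dψ(v) = (v₁, -v₂, -v₃)`
preserves the metric. -/
theorem rotation_about_x_axis_geodesic_isometry (b c : ℝ) (y₀ : ℝ)
    (ψ : ℝ × ℝ × ℝ → ℝ × ℝ × ℝ) (dψ : ℝ × ℝ × ℝ → ℝ × ℝ × ℝ)
    (hψ : ∀ p : ℝ × ℝ × ℝ, ψ p = (p.1, -p.2.1 + 2 * y₀, -p.2.2))
    (hdψ : ∀ v : ℝ × ℝ × ℝ, dψ v = (v.1, -v.2.1, -v.2.2)) :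
    ∀ (p v w : ℝ × ℝ × ℝ),
      sdMetric !![0, b; c, 0] (ψ p) (dψ v) (dψ w) = sdMetric !![0, b; c, 0] p v w := by
  intro p v w
  simp only [sdMetric, hψ, hdψ, entry00, entry01, entry10]
  ring
end
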